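/- Let n ≥ 3 and let u₁, u₂ and v₁, …, vₙ be strictly positive real numbers satisfying u₁ + u₂ = v₁ + ⋯ + vₙ and 1/u₁ + 1/u₂ = 1/v₁ + ⋯ + 1/vₙ. Then max(u₁, u₂) > vᵢ for every i ∈ {1, …, n}, and min(u₁, u₂) < vᵢ for every i ∈ {1, …, n}. -/
import Mathlib

lemma cs_aux {n : ℕ} (s : Finset (Fin n)) (v : Fin n → ℝ) (hv : ∀ j ∈ s, 0 < v j) :
    (s.card : ℝ)^2 ≤ (∑ j ∈ s, v j) * (∑ j ∈ s, 1/v j) := by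
  have h := Finset.sum_mul_sq_le_sq_mul_sq s (fun j => Real.sqrt (v j))
      (fun j => Real.sqrt (1/v j))
  have h1 : ∀ j ∈ s, Real.sqrt (v j) * Real.sqrt (1/(v j)) = 1 := by
    intro j hj
    rw [← Real.sqrt_mul (hv j hj).le, mul_one_div, div_self (hv j hj).ne', Real.sqrt_one]
  have h2 : ∑ j ∈ s, Real.sqrt (v j) * Real.sqrt (1/(v j)) = (s.card : ℝ) := by
    rw [Finset.sum_congr rfl h1]; simp
  have h3 : ∑ j ∈ s, (Real.sqrt (v j))^2 = ∑ j ∈ s, v j :=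
    Finset.sum_congr rfl fun j hj => Real.sq_sqrt (hv j hj).le
  have h4 : ∑ j ∈ s, (Real.sqrt (1/(v j)))^2 = ∑ j ∈ s, 1/(v j) :=
    Finset.sum_congr rfl fun j hj => Real.sq_sqrt (one_div_nonneg.mpr (hv j hj).le)
  calc (s.card : ℝ)^2 = (∑ j ∈ s, Real.sqrt (v j) * Real.sqrt (1/(v j)))^2 := by rw [h2]
    _ ≤ (∑ j ∈ s, (Real.sqrt (v j))^2) * (∑ j ∈ s, (Real.sqrt (1/(v j)))^2) := h
    _ = (∑ j ∈ s, v j) * (∑ j ∈ s, 1/v j) := by rw [h3, h4]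

lemma lightcone_aux (n : ℕ) (hn : 3 ≤ n) (u₁ u₂ : ℝ) (v : Fin n → ℝ)
    (hu₁ : 0 < u₁) (hu₂ : 0 < u₂) (hv : ∀ i, 0 < v i)
    (hsum : u₁ + u₂ = ∑ i, v i)
    (hinv : 1 / u₁ + 1 / u₂ = ∑ i, 1 / v i)
    (hle : u₁ ≤ u₂) :
    ∀ i : Fin n, v i < u₂ ∧ u₁ < v i := by
  intro i
  set s := Finset.univ.erase i with hsdef
  have hmem : i ∈ (Finset.univ : Finset (Fin n)) := Finset.mem_univ i
  have hS : ∑ j ∈ s, v j = u₁ + u₂ - v i := by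
    rw [Finset.sum_erase_eq_sub hmem, ← hsum]
  have hT : ∑ j ∈ s, 1/(v j) = 1/u₁ + 1/u₂ - 1/(v i) := by
    rw [Finset.sum_erase_eq_sub hmem, ← hinv]
  have hS0 : 0 ≤ ∑ j ∈ s, v j :=
    Finset.sum_nonneg fun j _ => (hv j).le
  have hT0 : 0 ≤ ∑ j ∈ s, 1/(v j) :=
    Finset.sum_nonneg fun j _ => one_div_nonneg.mpr (hv j).le
  have hcard : (s.card : ℝ) = (n : ℝ) - 1 := by
    rw [hsdef, Finset.card_erase_of_mem hmem, Finset.card_univ, Fintype.card_fin]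
    have : 1 ≤ n := by omega
    push_cast [Nat.cast_sub this]
    ring
  have hCS : ((n : ℝ) - 1)^2 ≤ (∑ j ∈ s, v j) * (∑ j ∈ s, 1/(v j)) := by
    rw [← hcard]; exact cs_aux s v (fun j _ => hv j)
  have hn3 : (3 : ℝ) ≤ (n : ℝ) := by exact_mod_cast hn
  have h4 : (4 : ℝ) ≤ ((n : ℝ) - 1)^2 := by nlinarith
  have hvi := hv i
  constructor
  · by_contra h
    push_neg at h  -- u₂ ≤ v i
    have h1 : ∑ j ∈ s, v j ≤ u₁ := by rw [hS]; linarith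
    have h2 : ∑ j ∈ s, 1/(v j) ≤ 1/u₁ + 1/u₂ := by
      rw [hT]; have : 0 < 1/(v i) := one_div_pos.mpr hvi
      linarith
    have h3 : (∑ j ∈ s, v j) * (∑ j ∈ s, 1/(v j)) ≤ u₁ * (1/u₁ + 1/u₂) :=
      mul_le_mul h1 h2 hT0 hu₁.le
    have h5 : u₁ * (1/u₁ + 1/u₂) ≤ 2 := by
      have e1 : u₁ * (1/u₁) = 1 := by field_simp
      have e2 : u₁ * (1/u₂) ≤ 1 := by
        rw [mul_one_div]; exact div_le_one_of_le₀ hle hu₂.le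
      nlinarith
    linarith
  · by_contra h
    push_neg at h  -- v i ≤ u₁
    have h1 : ∑ j ∈ s, v j ≤ 2 * u₂ := by rw [hS]; linarith
    have h2 : ∑ j ∈ s, 1/(v j) ≤ 1/u₂ := by
      rw [hT]
      have : 1/u₁ ≤ 1/(v i) := one_div_le_one_div_of_le (hv i) h
      linarith
    have h3 : (∑ j ∈ s, v j) * (∑ j ∈ s, 1/(v j)) ≤ 2 * u₂ * (1/u₂) :=
      mul_le_mul h1 h2 hT0 (by linarith)
    have h5 : 2 * u₂ * (1/u₂) = 2 := by field_simp
    linarith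

theorem lightcone_two_to_n (n : ℕ) (hn : 3 ≤ n) (u₁ u₂ : ℝ) (v : Fin n → ℝ)
    (hu₁ : 0 < u₁) (hu₂ : 0 < u₂) (hv : ∀ i, 0 < v i)
    (hsum : u₁ + u₂ = ∑ i, v i)
    (hinv : 1 / u₁ + 1 / u₂ = ∑ i, 1 / v i) :
    ∀ i : Fin n, max u₁ u₂ > v i ∧ min u₁ u₂ < v i := by
  intro i
  rcases le_total u₁ u₂ with hle | hle
  · have := lightcone_aux n hn u₁ u₂ v hu₁ hu₂ hv hsum hinv hle i
    rw [max_eq_right hle, min_eq_left hle]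
    exact ⟨this.1, this.2⟩
  · have := lightcone_aux n hn u₂ u₁ v hu₂ hu₁ hv (by linarith [hsum]) (by linarith [hinv]) hle i
    rw [max_eq_left hle, min_eq_right hle]
    exact ⟨this.1, this.2⟩
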